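/- Let a, b, v, w ∈ ℝ with a + b ≠ 0. Let A = (a + sin v − a·cos v, 1 − cos v − a·sin v), B = (−b + sin w + b·cos w, 1 − cos w + b·sin w), and M = (0, 2). Then A, M and B are collinear if and only if (cos v = cos w and sin v = sin w) or A = M or B = M. (This is the skaters theorem: two points moving on two non-coincident circles through O and M, starting at O and described by equal oriented angles, are always aligned with M.) -/

import Mathlib

private lemma cross_trans {x1 x2 y1 y2 z1 z2 : ℝ} (hy : y1 ≠ 0 ∨ y2 ≠ 0)
    (hxy : x1 * y2 - x2 * y1 = 0) (hyz : y1 * z2 - y2 * z1 = 0) :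
    x1 * z2 - x2 * z1 = 0 := by
  rcases hy with h | h
  · have h2 : y1 * (x1 * z2 - x2 * z1) = 0 := by linear_combination z1 * hxy + x1 * hyz
    exact (mul_eq_zero.mp h2).resolve_left h
  · have h2 : y2 * (x1 * z2 - x2 * z1) = 0 := by linear_combination z2 * hxy + x2 * hyz
    exact (mul_eq_zero.mp h2).resolve_left h

private lemma collinear_iff_det (p q r : ℝ × ℝ) :
    Collinear ℝ ({p, q, r} : Set (ℝ × ℝ)) ↔
      (p.1 - q.1) * (r.2 - q.2) - (p.2 - q.2) * (r.1 - q.1) = 0 := by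
  rw [collinear_iff_of_mem (show q ∈ ({p, q, r} : Set (ℝ × ℝ)) by simp)]
  constructor
  · rintro ⟨d, hd⟩
    obtain ⟨tp, htp⟩ := hd p (by simp)
    obtain ⟨tr, htr⟩ := hd r (by simp)
    rw [htp, htr]
    simp only [Prod.smul_mk, vadd_eq_add, Prod.fst_add, Prod.snd_add, Prod.smul_fst,
      Prod.smul_snd, smul_eq_mul]
    ring
  · intro h
    by_cases hpq : p = q
    · refine ⟨r - q, ?_⟩
      intro x hx
      simp only [Set.mem_insert_iff, Set.mem_singleton_iff] at hx
      rcases hx with rfl | rfl | rfl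
      · exact ⟨0, by simp [hpq]⟩
      · exact ⟨0, by simp⟩
      · exact ⟨1, by simp⟩
    · refine ⟨p - q, ?_⟩
      intro x hx
      simp only [Set.mem_insert_iff, Set.mem_singleton_iff] at hx
      have hne : p.1 - q.1 ≠ 0 ∨ p.2 - q.2 ≠ 0 := by
        by_contra hcon
        push_neg at hcon
        exact hpq (Prod.ext (by linarith [hcon.1]) (by linarith [hcon.2]))
      rcases hx with rfl | rfl | rfl
      · exact ⟨1, by simp⟩
      · exact ⟨0, by simp⟩
      · rcases hne with h1 | h1
        · refine ⟨(x.1 - q.1) / (p.1 - q.1), Prod.ext ?_ ?_⟩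
          · simp only [vadd_eq_add, Prod.smul_fst, Prod.fst_add, Prod.fst_sub, smul_eq_mul]
            field_simp
            ring
          · simp only [vadd_eq_add, Prod.smul_snd, Prod.snd_add, Prod.snd_sub, smul_eq_mul]
            field_simp
            linear_combination h
        · refine ⟨(x.2 - q.2) / (p.2 - q.2), Prod.ext ?_ ?_⟩
          · simp only [vadd_eq_add, Prod.smul_fst, Prod.fst_add, Prod.fst_sub, smul_eq_mul]
            field_simp
            linear_combination -h
          · simp only [vadd_eq_add, Prod.smul_snd, Prod.snd_add, Prod.snd_sub, smul_eq_mul]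
            field_simp
            ring

theorem stmt_16 (a b v w : ℝ) (hab : a + b ≠ 0) :
    let A : ℝ × ℝ := (a + Real.sin v - a * Real.cos v, 1 - Real.cos v - a * Real.sin v)
    let B : ℝ × ℝ := (-b + Real.sin w + b * Real.cos w, 1 - Real.cos w + b * Real.sin w)
    let M : ℝ × ℝ := (0, 2)
    Collinear ℝ ({A, M, B} : Set (ℝ × ℝ)) ↔
      (Real.cos v = Real.cos w ∧ Real.sin v = Real.sin w) ∨ A = M ∨ B = M := by
  intro A B M
  have pyth1 : Real.sin v ^ 2 + Real.cos v ^ 2 = 1 := Real.sin_sq_add_cos_sq v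
  have pyth2 : Real.sin w ^ 2 + Real.cos w ^ 2 = 1 := Real.sin_sq_add_cos_sq w
  rw [collinear_iff_det]
  simp only [A, B, M, Prod.mk.injEq]
  set c := Real.cos v with hcdef
  set s := Real.sin v with hsdef
  set C := Real.cos w with hCdef
  set S := Real.sin w with hSdef
  constructor
  · intro hD
    by_cases hA : a + s - a * c = 0 ∧ 1 - c - a * s = 2
    · exact Or.inr (Or.inl hA)
    by_cases hB : -b + S + b * C = 0 ∧ 1 - C + b * S = 2
    · exact Or.inr (Or.inr hB)
    left
    have hy : a + s - a * c ≠ 0 ∨ -1 - c - a * s ≠ 0 := by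
      by_contra hcon; push_neg at hcon
      exact hA ⟨hcon.1, by linarith [hcon.2]⟩
    have hz : -b + S + b * C ≠ 0 ∨ -1 - C + b * S ≠ 0 := by
      by_contra hcon; push_neg at hcon
      exact hB ⟨hcon.1, by linarith [hcon.2]⟩
    have hxy : s * (-1 - c - a * s) - (-(1 + c)) * (a + s - a * c) = 0 := by
      linear_combination (-a) * pyth1
    have hyz : (a + s - a * c) * (-1 - C + b * S) - (-1 - c - a * s) * (-b + S + b * C) = 0 := by
      linear_combination hD
    have hzw : (-b + S + b * C) * (-(1 + C)) - (-1 - C + b * S) * S = 0 := by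
      linear_combination (-b) * pyth2
    have hxz := cross_trans hy hxy hyz
    have hxw := cross_trans hz hxz hzw
    by_cases hc1 : c = -1
    · have hs0 : s = 0 := by
        have h2 : s ^ 2 = 0 := by linear_combination pyth1 + (1 - c) * hc1
        exact (pow_eq_zero_iff two_ne_zero).mp h2
      have hQ2 : -1 - c - a * s = 0 := by rw [hc1, hs0]; ring
      have hP : a + s - a * c ≠ 0 := by
        rcases hy with h | h
        · exact h
        · exact absurd hQ2 h
      have hT2 : -1 - C + b * S = 0 := by
        have h2 : (a + s - a * c) * (-1 - C + b * S) = 0 := by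
          linear_combination hyz + (-b + S + b * C) * hQ2
        exact (mul_eq_zero.mp h2).resolve_left hP
      have hR : -b + S + b * C ≠ 0 := by
        rcases hz with h | h
        · exact h
        · exact absurd hT2 h
      have hC1 : C = -1 := by
        have h2 : (-b + S + b * C) * (1 + C) = 0 := by
          linear_combination -hzw - S * hT2
        have h3 := (mul_eq_zero.mp h2).resolve_left hR
        linarith
      have hS0 : S = 0 := by
        have h2 : S ^ 2 = 0 := by linear_combination pyth2 + (1 - C) * hC1
        exact (pow_eq_zero_iff two_ne_zero).mp h2
      exact ⟨by rw [hc1, hC1], by rw [hs0, hS0]⟩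
    · by_cases hC1 : C = -1
      · exfalso
        have hS0 : S = 0 := by
          have h2 : S ^ 2 = 0 := by linear_combination pyth2 + (1 - C) * hC1
          exact (pow_eq_zero_iff two_ne_zero).mp h2
        have hT2 : -1 - C + b * S = 0 := by rw [hC1, hS0]; ring
        have hR : -b + S + b * C ≠ 0 := by
          rcases hz with h | h
          · exact h
          · exact absurd hT2 h
        have hQ2 : -1 - c - a * s = 0 := by
          have h2 : (-1 - c - a * s) * (-b + S + b * C) = 0 := by
            linear_combination -hyz + (a + s - a * c) * hT2
          exact (mul_eq_zero.mp h2).resolve_right hR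
        have h1c : (1 : ℝ) + c ≠ 0 := fun h => hc1 (by linarith)
        have hP : a + s - a * c = 0 := by
          have h2 : (1 + c) * (a + s - a * c) = 0 := by
            linear_combination hxy - s * hQ2
          exact (mul_eq_zero.mp h2).resolve_left h1c
        rcases hy with h | h
        · exact h hP
        · exact h hQ2
      · have h1c : (1 : ℝ) + c ≠ 0 := fun h => hc1 (by linarith)
        have h1C : (1 : ℝ) + C ≠ 0 := fun h => hC1 (by linarith)
        have hkey : (1 + c) * S - (1 + C) * s = 0 := by linear_combination hxw
        have h3 : (1 + c) * ((1 + C) * (C - c)) = 0 := by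
          linear_combination (-(1 + c) * S - (1 + C) * s) / 2 * hkey - (1 + C) ^ 2 / 2 * pyth1
            + (1 + c) ^ 2 / 2 * pyth2
        have hcC : c = C := by
          have h4 := (mul_eq_zero.mp h3).resolve_left h1c
          have h5 := (mul_eq_zero.mp h4).resolve_left h1C
          linarith
        refine ⟨hcC, ?_⟩
        have h6 : (1 + c) * (S - s) = 0 := by linear_combination hkey - s * hcC
        have h7 := (mul_eq_zero.mp h6).resolve_left h1c
        linarith
  · rintro (⟨hc, hs⟩ | ⟨h1, h2⟩ | ⟨h1, h2⟩)
    · rw [hc, hs]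
      linear_combination (a + b) * pyth2
    · linear_combination (-(-b + S + b*C)) * h2 + (-(1 + C - b*S)) * h1
    · linear_combination (1 + c + a*s) * h1 + (a + s - a*c) * h2
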